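/- Perturbation error bound: Let x ∈ ℝ^J with x ≥ 0, and let H, H̄ be diagonal matrices with positive entries, γ, γ̄ > 0, ρ, ρ̄ ∈ ℝ^J, and Γ > 0 with Γγ ≥ 1. Let y* be the minimizer of (1/2)yᵀ(H+γeeᵀ)y + ρᵀy over [0,x], and ū the minimizer of (1/2)yᵀ(H̄+γ̄eeᵀ)y + ρ̄ᵀy over [0,x]. Assume additionally h_i ≥ γ for all i. Then ‖y* − ū‖ ≤ Γ(‖ρ − ρ̄‖ + ‖x‖·‖H − H̄‖ + J‖x‖·|γ − γ̄|). -/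

import Mathlib

open Matrix

/-- Euclidean norm of a vector in `ℝ^J`. -/
noncomputable def sqnorm {J : ℕ} (v : Fin J → ℝ) : ℝ := Real.sqrt (∑ i, (v i)^2)

/-- Spectral (operator 2-) norm of a matrix. -/
noncomputable def spec {J : ℕ} (A : Matrix (Fin J) (Fin J) ℝ) : ℝ :=
  sSup {c | ∃ v : Fin J → ℝ, sqnorm v ≤ 1 ∧ c = sqnorm (A.mulVec v)}

open Finset

section AUXx
variable {J : ℕ}


lemma sqnorm_nonneg (v : Fin J → ℝ) : 0 ≤ sqnorm v := Real.sqrt_nonneg _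

lemma sqnorm_sq (v : Fin J → ℝ) : sqnorm v ^ 2 = ∑ i, (v i)^2 :=
  Real.sq_sqrt (by positivity)

lemma cs (v w : Fin J → ℝ) : ∑ i, v i * w i ≤ sqnorm v * sqnorm w :=
  Real.sum_mul_le_sqrt_mul_sqrt _ _ _

lemma sqnorm_mono {v w : Fin J → ℝ} (h : ∀ i, (v i)^2 ≤ (w i)^2) : sqnorm v ≤ sqnorm w :=
  Real.sqrt_le_sqrt (Finset.sum_le_sum fun i _ => h i)

lemma sqnorm_triple (a b c : Fin J → ℝ) :
    sqnorm (fun i => a i + b i + c i) ≤ sqnorm a + sqnorm b + sqnorm c := by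
  have tri : ∀ (u v : Fin J → ℝ), sqnorm (fun i => u i + v i) ≤ sqnorm u + sqnorm v := by
    intro u v
    have h1 : ∑ i, (u i + v i)^2 ≤ (sqnorm u + sqnorm v)^2 := by
      have := cs u v
      have e : ∑ i, (u i + v i)^2 = ∑ i, (u i)^2 + 2 * (∑ i, u i * v i) + ∑ i, (v i)^2 := by
        rw [Finset.mul_sum, ← Finset.sum_add_distrib, ← Finset.sum_add_distrib]
        exact Finset.sum_congr rfl fun i _ => by ring
      nlinarith [sqnorm_sq u, sqnorm_sq v, sqnorm_nonneg u, sqnorm_nonneg v]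
    calc sqnorm (fun i => u i + v i) = Real.sqrt (∑ i, (u i + v i)^2) := rfl
      _ ≤ Real.sqrt ((sqnorm u + sqnorm v)^2) := Real.sqrt_le_sqrt h1
      _ = sqnorm u + sqnorm v := Real.sqrt_sq (add_nonneg (sqnorm_nonneg u) (sqnorm_nonneg v))
  calc sqnorm (fun i => a i + b i + c i) ≤ sqnorm (fun i => a i + b i) + sqnorm c := tri _ c
    _ ≤ sqnorm a + sqnorm b + sqnorm c := by linarith [tri a b]

lemma sqnorm_const (c : ℝ) : sqnorm (fun _ : Fin J => c) = Real.sqrt J * |c| := by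
  simp [sqnorm, Finset.sum_const, Real.sqrt_mul (by positivity : (0:ℝ) ≤ (J:ℝ)), Real.sqrt_sq_eq_abs, mul_comm]

lemma sqnorm_smul (c : ℝ) (v : Fin J → ℝ) : sqnorm (fun i => c * v i) = |c| * sqnorm v := by
  simp only [sqnorm, mul_pow]
  rw [← Finset.mul_sum, Real.sqrt_mul (by positivity), Real.sqrt_sq_eq_abs]

lemma spec_ge_abs (d : Fin J → ℝ) (i : Fin J) : |d i| ≤ spec (Matrix.diagonal d) := by
  apply le_csSup
  · refine ⟨sqnorm d, ?_⟩
    rintro c ⟨v, hv, rfl⟩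
    have hmv : ∀ j, (Matrix.diagonal d).mulVec v j = d j * v j := fun j => Matrix.mulVec_diagonal ..
    have hv2 : ∀ j, (v j)^2 ≤ 1 := by
      intro j
      have h1 : (v j)^2 ≤ ∑ k, (v k)^2 :=
        Finset.single_le_sum (fun k _ => sq_nonneg (v k)) (Finset.mem_univ j)
      have h2 : ∑ k, (v k)^2 ≤ 1 := by
        have := sqnorm_sq v
        nlinarith [sqnorm_nonneg v]
      linarith
    apply sqnorm_mono
    intro j
    rw [hmv j]
    nlinarith [sq_nonneg (d j), hv2 j, sq_nonneg (d j * v j)]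
  · refine ⟨Pi.single i 1, ?_, ?_⟩
    · simp [sqnorm]
      rw [Finset.sum_eq_single i] <;> simp +contextual [Pi.single_apply]
    · have : ∀ j, (Matrix.diagonal d).mulVec (Pi.single i 1) j = (Pi.single i (d i) : Fin J → ℝ) j := by
        intro j
        rw [Matrix.mulVec_diagonal]
        by_cases hj : j = i <;> simp [hj, Pi.single_apply]
      simp only [sqnorm, this]
      rw [Finset.sum_eq_single i]
      · simp [Real.sqrt_sq_eq_abs]
      · intro b _ hb; simp [Pi.single_apply, hb]
      · simp

end AUXx

section VIx
variable {J : ℕ}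


lemma quad (h : Fin J → ℝ) (γ : ℝ) (v w : Fin J → ℝ) :
    v ⬝ᵥ (Matrix.diagonal h + γ • Matrix.vecMulVec 1 1).mulVec w
      = (∑ i, v i * (h i * w i)) + γ * (∑ i, v i) * (∑ i, w i) := by
  simp only [dotProduct, Matrix.mulVec, Matrix.add_apply, Matrix.smul_apply,
    Matrix.vecMulVec_apply, Pi.one_apply, smul_eq_mul, Matrix.diagonal_apply]
  have e : ∀ i : Fin J, (∑ j, ((if i = j then h i else 0) + γ * (1 * 1)) * w j)
      = h i * w i + γ * ∑ j, w j := by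
    intro i
    rw [show (∑ j, ((if i = j then h i else 0) + γ * (1 * 1)) * w j)
        = ∑ j, ((if i = j then h i * w j else 0) + γ * w j) from
      Finset.sum_congr rfl fun j _ => by by_cases hj : i = j <;> simp [hj] <;> ring]
    rw [Finset.sum_add_distrib, ← Finset.mul_sum]
    simp
  rw [Finset.sum_congr rfl fun i _ => congrArg (v i * ·) (e i)]
  rw [Finset.sum_congr rfl fun i _ => (by ring :
    v i * (h i * w i + γ * ∑ j, w j) = v i * (h i * w i) + (γ * ∑ j, w j) * v i)]
  rw [Finset.sum_add_distrib, ← Finset.mul_sum]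
  ring

/-- Variational inequality from constrained minimality. -/
lemma vi (h : Fin J → ℝ) (γ : ℝ) (x ρ y : Fin J → ℝ)
    (hymem : ∀ i, 0 ≤ y i ∧ y i ≤ x i)
    (hymin : ∀ z : Fin J → ℝ, (∀ i, 0 ≤ z i ∧ z i ≤ x i) →
      (1/2) * (y ⬝ᵥ (Matrix.diagonal h + γ • Matrix.vecMulVec 1 1).mulVec y) + ρ ⬝ᵥ y ≤
      (1/2) * (z ⬝ᵥ (Matrix.diagonal h + γ • Matrix.vecMulVec 1 1).mulVec z) + ρ ⬝ᵥ z)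
    (z : Fin J → ℝ) (hz : ∀ i, 0 ≤ z i ∧ z i ≤ x i) :
    0 ≤ (∑ i, (z i - y i) * (h i * y i)) + γ * (∑ i, (z i - y i)) * (∑ i, y i)
        + ∑ i, ρ i * (z i - y i) := by
  have key : ∀ t : ℝ, 0 < t → t ≤ 1 →
      0 ≤ t * ((∑ i, (z i - y i) * (h i * y i)) + γ * (∑ i, (z i - y i)) * (∑ i, y i)
            + ∑ i, ρ i * (z i - y i))
        + t^2 * (((∑ i, (z i - y i) * (h i * (z i - y i)))
            + γ * (∑ i, (z i - y i)) * (∑ i, (z i - y i))) / 2) := by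
    intro t ht0 ht1
    have hmem : ∀ i, 0 ≤ y i + t * (z i - y i) ∧ y i + t * (z i - y i) ≤ x i := by
      intro i
      obtain ⟨hy0, hy1⟩ := hymem i
      obtain ⟨hz0, hz1⟩ := hz i
      constructor <;> nlinarith
    have hmin := hymin (y + t • (z - y)) (by
      intro i
      have : (y + t • (z - y)) i = y i + t * (z i - y i) := rfl
      rw [this]; exact hmem i)
    rw [quad, quad] at hmin
    have hap : ∀ i, (y + t • (z - y)) i = y i + t * (z i - y i) := fun i => rfl
    simp only [dotProduct, hap] at hmin
    have e1 : ∑ i, (y i + t * (z i - y i)) * (h i * (y i + t * (z i - y i)))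
        = (∑ i, y i * (h i * y i)) + t * (2 * ∑ i, (z i - y i) * (h i * y i))
          + t^2 * ∑ i, (z i - y i) * (h i * (z i - y i)) := by
      rw [Finset.mul_sum, Finset.mul_sum, Finset.mul_sum, ← Finset.sum_add_distrib,
        ← Finset.sum_add_distrib]
      exact Finset.sum_congr rfl fun i _ => by ring
    have e2 : ∑ i, (y i + t * (z i - y i)) = (∑ i, y i) + t * ∑ i, (z i - y i) := by
      rw [Finset.sum_add_distrib, Finset.mul_sum]
    have e3 : ∑ i, ρ i * (y i + t * (z i - y i))
        = (∑ i, ρ i * y i) + t * ∑ i, ρ i * (z i - y i) := by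
      rw [Finset.mul_sum, ← Finset.sum_add_distrib]
      exact Finset.sum_congr rfl fun i _ => by ring
    rw [e1, e2, e3] at hmin
    nlinarith [hmin]
  set g : ℝ := (∑ i, (z i - y i) * (h i * y i)) + γ * (∑ i, (z i - y i)) * (∑ i, y i)
      + ∑ i, ρ i * (z i - y i) with hgdef
  set c : ℝ := ((∑ i, (z i - y i) * (h i * (z i - y i)))
      + γ * (∑ i, (z i - y i)) * (∑ i, (z i - y i))) / 2 with hcdef
  by_contra hneg
  push_neg at hneg
  have ht0 : 0 < min 1 (-g / (|c| + 1)) :=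
    lt_min one_pos (div_pos (by linarith) (by positivity))
  have hk := key _ ht0 (min_le_left _ _)
  set t := min 1 (-g / (|c| + 1))
  have hk' : 0 ≤ t * (g + t * c) := by nlinarith [hk]
  have h6 : 0 ≤ g + t * c := le_of_mul_le_mul_left (by linarith) ht0
  have h1 : t * c ≤ t * |c| := mul_le_mul_of_nonneg_left (le_abs_self c) (le_of_lt ht0)
  have h2 : t ≤ -g / (|c| + 1) := min_le_right _ _
  have h3 : t * |c| ≤ (-g / (|c| + 1)) * |c| := mul_le_mul_of_nonneg_right h2 (abs_nonneg _)
  have h4 : (-g / (|c| + 1)) * |c| < -g := by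
    rw [div_mul_eq_mul_div, div_lt_iff₀ (by positivity)]
    nlinarith [abs_nonneg c]
  linarith

end VIx

set_option maxHeartbeats 2000000 in
/-- perturbation error bound
`‖y* − ū‖ ≤ Γ(‖ρ − ρ̄‖ + ‖x‖‖H − H̄‖ + J‖x‖|γ − γ̄|)` for the minimizers `y*`, `ū` of
the box-constrained QPs with data `(H, γ, ρ)` and `(H̄, γ̄, ρ̄)` respectively. -/
theorem stmt8 {J : ℕ} (x ρ ρbar h hbar : Fin J → ℝ) (γ γbar Γ : ℝ)
    (hx : ∀ i, 0 ≤ x i)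
    (hh : ∀ i, 0 < h i) (hhbar : ∀ i, 0 < hbar i)
    (hγ : 0 < γ) (hγbar : 0 < γbar) (hΓ : 0 < Γ) (hΓγ : 1 ≤ Γ * γ)
    (hhγ : ∀ i, γ ≤ h i)
    (ystar ubar : Fin J → ℝ)
    (hymem : ∀ i, 0 ≤ ystar i ∧ ystar i ≤ x i)
    (hymin : ∀ z : Fin J → ℝ, (∀ i, 0 ≤ z i ∧ z i ≤ x i) →
      (1/2) * (ystar ⬝ᵥ (Matrix.diagonal h + γ • Matrix.vecMulVec 1 1).mulVec ystar)
          + ρ ⬝ᵥ ystar ≤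
        (1/2) * (z ⬝ᵥ (Matrix.diagonal h + γ • Matrix.vecMulVec 1 1).mulVec z)
          + ρ ⬝ᵥ z)
    (humem : ∀ i, 0 ≤ ubar i ∧ ubar i ≤ x i)
    (humin : ∀ z : Fin J → ℝ, (∀ i, 0 ≤ z i ∧ z i ≤ x i) →
      (1/2) * (ubar ⬝ᵥ (Matrix.diagonal hbar + γbar • Matrix.vecMulVec 1 1).mulVec ubar)
          + ρbar ⬝ᵥ ubar ≤
        (1/2) * (z ⬝ᵥ (Matrix.diagonal hbar + γbar • Matrix.vecMulVec 1 1).mulVec z)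
          + ρbar ⬝ᵥ z) :
    sqnorm (ystar - ubar) ≤
      Γ * (sqnorm (ρ - ρbar)
            + sqnorm x * spec (Matrix.diagonal h - Matrix.diagonal hbar)
            + (J : ℝ) * sqnorm x * |γ - γbar|) := by
  rcases Nat.eq_zero_or_pos J with hJ | hJpos
  · subst hJ
    have hz : ∀ v : Fin 0 → ℝ, sqnorm v = 0 := by intro v; simp [sqnorm]
    rw [hz, hz, hz]
    simp
  -- main case
  set d : Fin J → ℝ := fun i => ubar i - ystar i with hddef
  have g1 := vi h γ x ρ ystar hymem hymin ubar humem
  have g2 := vi hbar γbar x ρbar ubar humem humin ystar hymem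
  -- sums bookkeeping
  set Su : ℝ := ∑ i, ubar i with hSu
  set w : Fin J → ℝ := fun i => (h i - hbar i) * ubar i + (γ - γbar) * Su + (ρ i - ρbar i)
    with hwdef
  have hsplit1 : ∑ i, d i * (h i * ystar i)
      = (∑ i, d i * (h i * ubar i)) - ∑ i, h i * (d i)^2 := by
    rw [← Finset.sum_sub_distrib]
    exact Finset.sum_congr rfl fun i _ => by simp only [hddef]; ring
  have hsplit2 : ∑ i, ystar i = Su - ∑ i, d i := by
    rw [hSu, ← Finset.sum_sub_distrib]
    exact Finset.sum_congr rfl fun i _ => by simp only [hddef]; ring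
  have hneg : ∀ i, ystar i - ubar i = -(d i) := fun i => by simp only [hddef]; ring
  simp only [hneg] at g2
  have g2' : 0 ≤ -((∑ i, d i * (hbar i * ubar i)) + γbar * (∑ i, d i) * Su
      + ∑ i, ρbar i * d i) := by
    have e1 : ∑ i, -(d i) * (hbar i * ubar i) = -∑ i, d i * (hbar i * ubar i) := by
      rw [← Finset.sum_neg_distrib]; exact Finset.sum_congr rfl fun i _ => by ring
    have e2 : ∑ i, -(d i) = -∑ i, d i := by
      rw [← Finset.sum_neg_distrib]
    have e3 : ∑ i, ρbar i * -(d i) = -∑ i, ρbar i * d i := by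
      rw [← Finset.sum_neg_distrib]; exact Finset.sum_congr rfl fun i _ => by ring
    rw [e1, e2, e3] at g2
    linarith [g2]
  have hf1 : ∑ i, (ubar i - ystar i) = ∑ i, d i :=
    Finset.sum_congr rfl fun i _ => by simp only [hddef]
  have hf2 : ∑ i, ρ i * (ubar i - ystar i) = ∑ i, ρ i * d i :=
    Finset.sum_congr rfl fun i _ => by simp only [hddef]
  have hf3 : ∑ i, (ubar i - ystar i) * (h i * ystar i) = ∑ i, d i * (h i * ystar i) :=
    Finset.sum_congr rfl fun i _ => by simp only [hddef]
  rw [hf3, hf1, hf2, hsplit1, hsplit2] at g1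
  -- combine to the key energy inequality
  have hwsum : ∑ i, d i * w i
      = (∑ i, d i * ((h i - hbar i) * ubar i)) + (γ - γbar) * (∑ i, d i) * Su
        + ∑ i, d i * (ρ i - ρbar i) := by
    simp only [hwdef, mul_add]
    rw [Finset.sum_add_distrib, Finset.sum_add_distrib]
    congr 1
    congr 1
    rw [← Finset.sum_mul]
    ring
  have hda : ∑ i, d i * ((h i - hbar i) * ubar i)
      = (∑ i, d i * (h i * ubar i)) - ∑ i, d i * (hbar i * ubar i) := by
    rw [← Finset.sum_sub_distrib]; exact Finset.sum_congr rfl fun i _ => by ring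
  have hdr : ∑ i, d i * (ρ i - ρbar i) = (∑ i, ρ i * d i) - ∑ i, ρbar i * d i := by
    rw [← Finset.sum_sub_distrib]; exact Finset.sum_congr rfl fun i _ => by ring
  have key : (∑ i, h i * (d i)^2) + γ * (∑ i, d i)^2 ≤ ∑ i, d i * w i := by
    rw [hwsum, hda, hdr]
    nlinarith [g1, g2']
  have hlow : γ * ∑ i, (d i)^2 ≤ (∑ i, h i * (d i)^2) + γ * (∑ i, d i)^2 := by
    have h1 : γ * ∑ i, (d i)^2 ≤ ∑ i, h i * (d i)^2 := by
      rw [Finset.mul_sum]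
      exact Finset.sum_le_sum fun i _ =>
        mul_le_mul_of_nonneg_right (hhγ i) (sq_nonneg _)
    nlinarith [sq_nonneg (∑ i, d i)]
  have hcs : ∑ i, d i * w i ≤ sqnorm d * sqnorm w := cs d w
  -- bound sqnorm w
  set M : ℝ := spec (Matrix.diagonal h - Matrix.diagonal hbar) with hMdef
  have hMabs : ∀ i, |h i - hbar i| ≤ M := by
    intro i
    have := spec_ge_abs (fun j => h j - hbar j) i
    rw [hMdef, show Matrix.diagonal h - Matrix.diagonal hbar
        = Matrix.diagonal (fun j => h j - hbar j) from by
      rw [← Matrix.diagonal_sub]]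
    exact this
  have hM0 : 0 ≤ M := le_trans (abs_nonneg _) (hMabs ⟨0, hJpos⟩)
  have hux : ∀ i, (ubar i)^2 ≤ (x i)^2 := by
    intro i; obtain ⟨h1, h2⟩ := humem i; nlinarith
  have hw1 : sqnorm (fun i => (h i - hbar i) * ubar i) ≤ M * sqnorm x := by
    have : sqnorm (fun i => (h i - hbar i) * ubar i) ≤ sqnorm (fun i => M * x i) := by
      apply sqnorm_mono
      intro i
      have h1 := hMabs i
      have h2 := hux i
      have h3 := abs_nonneg (h i - hbar i)
      have h4 := sq_abs (h i - hbar i)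
      have h5 := sq_nonneg (ubar i)
      have hx2 := sq_nonneg (x i)
      have hA : (h i - hbar i)^2 ≤ M^2 := by nlinarith [mul_self_le_mul_self h3 h1]
      nlinarith [mul_le_mul hA h2 h5 (sq_nonneg M)]
    calc sqnorm (fun i => (h i - hbar i) * ubar i) ≤ sqnorm (fun i => M * x i) := this
      _ = |M| * sqnorm x := sqnorm_smul M x
      _ = M * sqnorm x := by rw [abs_of_nonneg hM0]
  have hSu_abs : |Su| ≤ Real.sqrt J * sqnorm x := by
    have h1 : |Su| ≤ ∑ i, |ubar i| := by
      rw [hSu]; exact Finset.abs_sum_le_sum_abs _ _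
    have h2 : ∑ i, |ubar i| = ∑ i, (1:ℝ) * |ubar i| := by simp
    have h3 : ∑ i, (1:ℝ) * |ubar i| ≤ sqnorm (fun _ : Fin J => (1:ℝ))
        * sqnorm (fun i => |ubar i|) := cs _ _
    have h4 : sqnorm (fun _ : Fin J => (1:ℝ)) = Real.sqrt J := by
      simp [sqnorm_const]
    have h5 : sqnorm (fun i => |ubar i|) ≤ sqnorm x := by
      apply sqnorm_mono; intro i; rw [sq_abs]; exact hux i
    have h6 : (0:ℝ) ≤ Real.sqrt J := Real.sqrt_nonneg _
    calc |Su| ≤ ∑ i, (1:ℝ) * |ubar i| := by rw [← h2]; exact h1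
      _ ≤ Real.sqrt J * sqnorm (fun i => |ubar i|) := by rw [← h4]; exact h3
      _ ≤ Real.sqrt J * sqnorm x := mul_le_mul_of_nonneg_left h5 h6
  have hw2 : sqnorm (fun _ : Fin J => (γ - γbar) * Su) ≤ (J:ℝ) * sqnorm x * |γ - γbar| := by
    rw [sqnorm_const, abs_mul]
    have h6 : (0:ℝ) ≤ Real.sqrt J := Real.sqrt_nonneg _
    have h7 : Real.sqrt J * Real.sqrt J = (J:ℝ) := Real.mul_self_sqrt (by positivity)
    calc Real.sqrt J * (|γ - γbar| * |Su|)
        ≤ Real.sqrt J * (|γ - γbar| * (Real.sqrt J * sqnorm x)) := by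
          apply mul_le_mul_of_nonneg_left _ h6
          exact mul_le_mul_of_nonneg_left hSu_abs (abs_nonneg _)
      _ = (Real.sqrt J * Real.sqrt J) * sqnorm x * |γ - γbar| := by ring
      _ = (J:ℝ) * sqnorm x * |γ - γbar| := by rw [h7]
  have hw3 : sqnorm (fun i => ρ i - ρbar i) = sqnorm (ρ - ρbar) := rfl
  have hwbound : sqnorm w ≤ sqnorm (ρ - ρbar) + sqnorm x * M
      + (J:ℝ) * sqnorm x * |γ - γbar| := by
    have htri := sqnorm_triple (fun i => (h i - hbar i) * ubar i)
      (fun _ => (γ - γbar) * Su) (fun i => ρ i - ρbar i)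
    have hweq : sqnorm w = sqnorm (fun i => (h i - hbar i) * ubar i
        + (γ - γbar) * Su + (ρ i - ρbar i)) := rfl
    rw [hweq]
    calc sqnorm (fun i => (h i - hbar i) * ubar i + (γ - γbar) * Su + (ρ i - ρbar i))
        ≤ sqnorm (fun i => (h i - hbar i) * ubar i) + sqnorm (fun _ : Fin J => (γ - γbar) * Su)
          + sqnorm (fun i => ρ i - ρbar i) := htri
      _ ≤ M * sqnorm x + (J:ℝ) * sqnorm x * |γ - γbar| + sqnorm (ρ - ρbar) := by
          rw [hw3]; linarith [hw1, hw2]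
      _ = sqnorm (ρ - ρbar) + sqnorm x * M + (J:ℝ) * sqnorm x * |γ - γbar| := by ring
  -- finish
  have hLHS : sqnorm (ystar - ubar) = sqnorm d := by
    simp only [sqnorm]
    congr 1
    exact Finset.sum_congr rfl fun i _ => by
      simp only [Pi.sub_apply, hddef]; ring
  rw [hLHS]
  set nd : ℝ := sqnorm d with hnd
  set B : ℝ := sqnorm (ρ - ρbar) + sqnorm x * M + (J:ℝ) * sqnorm x * |γ - γbar| with hB
  have hB0 : 0 ≤ B := by
    rw [hB]
    have := sqnorm_nonneg (ρ - ρbar)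
    have := sqnorm_nonneg x
    have := abs_nonneg (γ - γbar)
    positivity
  have hnd0 : 0 ≤ nd := sqnorm_nonneg d
  have hmain : γ * nd^2 ≤ nd * B := by
    have h1 : γ * nd^2 ≤ ∑ i, d i * w i := by
      rw [hnd, sqnorm_sq]; linarith [key, hlow]
    have h2 : sqnorm d * sqnorm w ≤ nd * B := by
      rw [hnd]
      exact mul_le_mul_of_nonneg_left hwbound (sqnorm_nonneg d)
    linarith [hcs]
  rcases eq_or_lt_of_le hnd0 with h0 | h0
  · rw [← h0]; positivity
  · have hgd : γ * nd ≤ B := by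
      have := mul_le_mul_of_nonneg_right hmain (le_of_lt (inv_pos.mpr h0))
      rw [mul_assoc, mul_assoc] at this
      have e1 : nd^2 * nd⁻¹ = nd := by field_simp [ne_of_gt h0]
      have e2 : B * nd⁻¹ * nd = B := by field_simp [ne_of_gt h0]
      nlinarith [this, e1, h0, hB0]
    nlinarith [mul_le_mul_of_nonneg_left hgd (le_of_lt hΓ), h0, hΓγ,
      mul_le_mul_of_nonneg_right hΓγ (le_of_lt h0)]
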